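/- Completeness for separated GR(k): if a state s is not in the system's winning region of the weak Büchi game (GS, GF(acc)), then the system has no winning strategy for the separated GR(k) game (GS, φ) from s; i.e., the environment can force the play to converge to a non-accepting SCC and, within it, satisfy all assumptions of some φ_l whose guarantees cannot all be satisfied there. -/

import Mathlib

open scoped Classical

/-- Reachability: reflexive-transitive closure of the edge relation. -/
def Reach {V : Type*} (E : V → V → Prop) : V → V → Prop := Relation.ReflTransGen E

/-- Two vertices lie in the same strongly connected component: mutual reachability. -/
def SameSCC {V : Type*} (E : V → V → Prop) (s t : V) : Prop := Reach E s t ∧ Reach E t s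

/-- Edge relation of the product of two directed graphs (componentwise). -/
def prodEdge {I O : Type*} (EI : I → I → Prop) (EO : O → O → Prop) :
    I × O → I × O → Prop := fun p q => EI p.1 q.1 ∧ EO p.2 q.2

/-- A system strategy: given the history of states so far and the new environment
input, choose the new output. -/
abbrev Strat (I O : Type*) := List (I × O) → I → O

/-- The history (prefix) of a play up to and including position `n`. -/
def hist {I O : Type*} (π : ℕ → I × O) (n : ℕ) : List (I × O) := (List.range (n + 1)).map π

/-- A play is consistent with system strategy `f` from state `s`. -/
def Consistent {I O : Type*} (f : Strat I O) (s : I × O) (π : ℕ → I × O) : Prop :=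
  π 0 = s ∧ ∀ n, (π (n + 1)).2 = f (hist π n) (π (n + 1)).1

/-- All environment moves along the play are edges of the input graph. -/
def EnvLegal {I O : Type*} (EI : I → I → Prop) (π : ℕ → I × O) : Prop :=
  ∀ n, EI (π n).1 (π (n + 1)).1

/-- All system moves along the play are edges of the output graph. -/
def SysLegal {I O : Type*} (EO : O → O → Prop) (π : ℕ → I × O) : Prop :=
  ∀ n, EO (π n).2 (π (n + 1)).2

/-- The play satisfies `P` infinitely often. -/
def InfOften {V : Type*} (P : V → Prop) (π : ℕ → V) : Prop := ∀ N, ∃ n, N ≤ n ∧ P (π n)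

/-- `f` is a winning system strategy for the Büchi condition `GF acc` from `s`:
every play from `s` consistent with `f` in which the environment moves legally has
legal system moves and visits `acc` infinitely often. -/
def WinningFrom {I O : Type*} (EI : I → I → Prop) (EO : O → O → Prop)
    (acc : I × O → Prop) (f : Strat I O) (s : I × O) : Prop :=
  ∀ π : ℕ → I × O, Consistent f s π → EnvLegal EI π →
    SysLegal EO π ∧ InfOften acc π

/-- The system can win the weak Büchi game `GF acc` from `s`. -/
def SysWins {I O : Type*} (EI : I → I → Prop) (EO : O → O → Prop)
    (acc : I × O → Prop) (s : I × O) : Prop := ∃ f, WinningFrom EI EO acc f s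

/-- Projection onto the inputs of the SCC (of the product graph) containing `s`. -/
def sccProjI {I O : Type*} (EI : I → I → Prop) (EO : O → O → Prop) (s : I × O) : Set I :=
  {i' | ∃ o', SameSCC (prodEdge EI EO) s (i', o')}

/-- Projection onto the outputs of the SCC (of the product graph) containing `s`. -/
def sccProjO {I O : Type*} (EI : I → I → Prop) (EO : O → O → Prop) (s : I × O) : Set O :=
  {o' | ∃ i', SameSCC (prodEdge EI EO) s (i', o')}

/-- A play satisfies the GR(k) formula
`⋀_l (⋀_i GF a_{l,i} → ⋀_j GF g_{l,j})`, with assumptions over inputs and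
guarantees over outputs. -/
def SatGRk {I O : Type*} {k : ℕ} {nl ml : Fin k → ℕ}
    (a : ∀ l : Fin k, Fin (nl l) → I → Prop)
    (g : ∀ l : Fin k, Fin (ml l) → O → Prop) (π : ℕ → I × O) : Prop :=
  ∀ l, (∀ i, InfOften (fun p : I × O => a l i p.1) π) →
    (∀ j, InfOften (fun p : I × O => g l j p.2) π)

/-- A state is accepting: for every conjunct `l`, either every guarantee is satisfied
somewhere in the output projection of its SCC, or some assumption is satisfied
nowhere in the input projection of its SCC. -/
def AcceptingSt {I O : Type*} {k : ℕ} {nl ml : Fin k → ℕ}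
    (EI : I → I → Prop) (EO : O → O → Prop)
    (a : ∀ l : Fin k, Fin (nl l) → I → Prop)
    (g : ∀ l : Fin k, Fin (ml l) → O → Prop) (s : I × O) : Prop :=
  ∀ l, (∀ j, ∃ o' ∈ sccProjO EI EO s, g l j o') ∨
    (∃ ii, ∀ i' ∈ sccProjI EI EO s, ¬ a l ii i')

/-- The system wins the separated GR(k) game from `s`. -/
def WinsGRk {I O : Type*} {k : ℕ} {nl ml : Fin k → ℕ}
    (EI : I → I → Prop) (EO : O → O → Prop)
    (a : ∀ l : Fin k, Fin (nl l) → I → Prop)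
    (g : ∀ l : Fin k, Fin (ml l) → O → Prop) (s : I × O) : Prop :=
  ∃ f : Strat I O, ∀ π : ℕ → I × O, Consistent f s π → EnvLegal EI π →
    SysLegal EO π ∧ SatGRk a g π


/-! ### Auxiliary infrastructure for the completeness proof -/

section GRKAux

variable {α : Type*}

/-- A walk in a directed graph: `GWalk r a l b` means starting at `a`, the successive
vertices visited are given by `l`, and the walk ends at `b`. -/
inductive GWalk (r : α → α → Prop) : α → List α → α → Prop
  | nil (a : α) : GWalk r a [] a
  | cons {a b c : α} {l : List α} : r a b → GWalk r b l c → GWalk r a (b :: l) c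

lemma GWalk.append_walk {r : α → α → Prop} {a b c : α} {l1 l2 : List α}
    (h1 : GWalk r a l1 b) (h2 : GWalk r b l2 c) : GWalk r a (l1 ++ l2) c := by
  induction h1 with
  | nil => exact h2
  | cons hab _ ih => exact GWalk.cons hab (ih h2)

lemma gwalk_of_reach {r : α → α → Prop} {a b : α} (h : Reach r a b) :
    ∃ l, GWalk r a l b := by
  induction h using Relation.ReflTransGen.head_induction_on with
  | refl => exact ⟨[], GWalk.nil b⟩
  | head hab _ ih =>
      obtain ⟨l, hl⟩ := ih
      exact ⟨_ :: l, GWalk.cons hab hl⟩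

lemma gwalk_end_mem {r : α → α → Prop} {a b : α} {l : List α}
    (h : GWalk r a l b) : b ∈ a :: l := by
  induction h with
  | nil => simp
  | cons _ _ ih => simpa using Or.inr (by simpa using ih)

lemma gwalk_getD_last {r : α → α → Prop} {a b : α} {l : List α} (d : α)
    (h : GWalk r a l b) : (a :: l).getD l.length d = b := by
  induction h with
  | nil => simp
  | cons _ _ ih => simpa using ih

lemma gwalk_getD_edge {r : α → α → Prop} {a b : α} {l : List α} (d : α)
    (h : GWalk r a l b) : ∀ j, j + 1 ≤ l.length →
      r ((a :: l).getD j d) ((a :: l).getD (j + 1) d) := by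
  induction h with
  | nil => intro j hj; simp at hj
  | cons hab hw ih =>
      intro j hj
      cases j with
      | zero => simpa using hab
      | succ j =>
          simp only [List.length_cons] at hj
          simpa using ih j (by omega)

/-- Specification of a sweep walk from `x`: a nonempty closed walk from `x` back to `x`
visiting every vertex of the strongly connected component of `x`. -/
def SweepSpec (r : α → α → Prop) (x : α) (w : List α) : Prop :=
  GWalk r x w x ∧ w ≠ [] ∧ ∀ y, SameSCC r x y → y ∈ x :: w

noncomputable def sweepWalk (r : α → α → Prop) (x : α) : List α :=
  if h : ∃ w, SweepSpec r x w then h.choose else []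

lemma sweepWalk_walk (r : α → α → Prop) (x : α) : GWalk r x (sweepWalk r x) x := by
  unfold sweepWalk
  split
  · next h => exact h.choose_spec.1
  · exact GWalk.nil x

lemma sweepWalk_covers {r : α → α → Prop} {x : α} (h : ∃ w, SweepSpec r x w) :
    ∀ y, SameSCC r x y → y ∈ x :: sweepWalk r x := by
  unfold sweepWalk
  rw [dif_pos h]
  exact h.choose_spec.2.2

lemma sweepSpec_exists [Fintype α] {r : α → α → Prop} {x z : α}
    (hxz : r x z) (hzx : Reach r z x) : ∃ w, SweepSpec r x w := by
  obtain ⟨lz, hlz⟩ := gwalk_of_reach hzx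
  have base : ∀ L : List α, ∃ w : List α, GWalk r x w x ∧ w ≠ [] ∧
      ∀ y ∈ L, SameSCC r x y → y ∈ x :: w := by
    intro L
    induction L with
    | nil => exact ⟨z :: lz, GWalk.cons hxz hlz, by simp, by simp⟩
    | cons y t ih =>
        obtain ⟨w0, hw0, hne, hcov⟩ := ih
        by_cases hy : SameSCC r x y
        · obtain ⟨l1, hl1⟩ := gwalk_of_reach hy.1
          obtain ⟨l2, hl2⟩ := gwalk_of_reach hy.2
          refine ⟨l1 ++ (l2 ++ w0), (hl1.append_walk (hl2.append_walk hw0)), by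
              simp [hne], ?_⟩
          intro y' hy' hscc
          rcases List.mem_cons.mp hy' with rfl | hy't
          · have := gwalk_end_mem hl1
            rcases List.mem_cons.mp this with rfl | hm
            · simp
            · simp [hm]
          · have := hcov y' hy't hscc
            rcases List.mem_cons.mp this with rfl | hm
            · simp
            · simp [hm]
        · refine ⟨w0, hw0, hne, ?_⟩
          intro y' hy' hscc
          rcases List.mem_cons.mp hy' with rfl | hy't
          · exact absurd hscc hy
          · exact hcov y' hy't hscc
  obtain ⟨w, hw, hne, hcov⟩ := base Finset.univ.toList
  exact ⟨w, hw, hne, fun y hy => hcov y (by simp [Finset.mem_toList]) hy⟩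

noncomputable def blockW (r : α → α → Prop) (x : α) : List α := x :: sweepWalk r x

lemma blockW_pos (r : α → α → Prop) : ∀ x, 0 < (blockW r x).length := by
  intro x; simp [blockW]

noncomputable def sweepStart (bW : α → List α) (μ : ℕ → α) : ℕ → ℕ
  | 0 => 0
  | m + 1 => sweepStart bW μ m + (bW (μ m)).length

noncomputable def sweepBlk (bW : α → List α) (μ : ℕ → α) (n : ℕ) : ℕ :=
  Nat.findGreatest (fun m => sweepStart bW μ m ≤ n) n

lemma sweepStart_zero (bW : α → List α) (μ : ℕ → α) : sweepStart bW μ 0 = 0 := rfl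

lemma sweepStart_succ (bW : α → List α) (μ : ℕ → α) (m : ℕ) :
    sweepStart bW μ (m + 1) = sweepStart bW μ m + (bW (μ m)).length := rfl

variable {bW : α → List α} {μ : ℕ → α}

lemma sweepStart_mono (hpos : ∀ x, 0 < (bW x).length) :
    StrictMono (sweepStart bW μ) := by
  apply strictMono_nat_of_lt_succ
  intro m
  have := hpos (μ m)
  rw [sweepStart_succ]
  omega

lemma le_sweepStart (hpos : ∀ x, 0 < (bW x).length) (m : ℕ) :
    m ≤ sweepStart bW μ m := by
  induction m with
  | zero => simp [sweepStart_zero]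
  | succ m ih => have := hpos (μ m); rw [sweepStart_succ]; omega

lemma sweepStart_blk_le (n : ℕ) :
    sweepStart bW μ (sweepBlk bW μ n) ≤ n :=
  Nat.findGreatest_spec (P := fun m => sweepStart bW μ m ≤ n) (Nat.zero_le n)
    (by show sweepStart bW μ 0 ≤ n; rw [sweepStart_zero]; exact Nat.zero_le n)

lemma lt_sweepStart_blk_succ (hpos : ∀ x, 0 < (bW x).length) (n : ℕ) :
    n < sweepStart bW μ (sweepBlk bW μ n + 1) := by
  by_contra hc
  push_neg at hc
  have h1 : sweepBlk bW μ n + 1 ≤ n := le_trans (le_sweepStart hpos _) hc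
  have h2 := Nat.le_findGreatest (P := fun m => sweepStart bW μ m ≤ n) h1 hc
  simp only [sweepBlk] at h2 ⊢
  omega

lemma sweepBlk_eq (hpos : ∀ x, 0 < (bW x).length) {m n : ℕ}
    (h1 : sweepStart bW μ m ≤ n)
    (h2 : n < sweepStart bW μ (m + 1)) : sweepBlk bW μ n = m := by
  have hge : m ≤ sweepBlk bW μ n :=
    Nat.le_findGreatest (le_trans (le_sweepStart hpos m) h1) h1
  have hle : sweepBlk bW μ n ≤ m := by
    by_contra hc
    push_neg at hc
    have h3 : sweepStart bW μ (m + 1) ≤ sweepStart bW μ (sweepBlk bW μ n) :=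
      (sweepStart_mono hpos).monotone hc
    have h4 := sweepStart_blk_le (bW := bW) (μ := μ) n
    omega
  omega

lemma sweepBlk_le (n : ℕ) : sweepBlk bW μ n ≤ n := Nat.findGreatest_le n

lemma sweepStart_congr {μ2 : ℕ → α} {m : ℕ} (h : ∀ k < m, μ k = μ2 k) :
    sweepStart bW μ m = sweepStart bW μ2 m := by
  induction m with
  | zero => rfl
  | succ m ih =>
      rw [sweepStart_succ, sweepStart_succ, ih (fun k hk => h k (by omega)),
        h m (by omega)]

lemma findGreatest_congr {P Q : ℕ → Prop} [DecidablePred P] [DecidablePred Q]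
    (n : ℕ) (h : ∀ m ≤ n, (P m ↔ Q m)) :
    Nat.findGreatest P n = Nat.findGreatest Q n := by
  induction n with
  | zero => rfl
  | succ n ih =>
      rw [Nat.findGreatest_succ, Nat.findGreatest_succ]
      by_cases hp : P (n + 1)
      · rw [if_pos hp, if_pos ((h _ le_rfl).mp hp)]
      · rw [if_neg hp, if_neg (fun hq => hp ((h _ le_rfl).mpr hq)),
          ih (fun m hm => h m (by omega))]

/-- The virtual input sequence: replay `μ` block by block, inserting after each input a
sweep of its strongly connected component (when available). -/
noncomputable def sweepV (r : α → α → Prop) (μ : ℕ → α) (n : ℕ) : α :=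
  (blockW r (μ (sweepBlk (blockW r) μ n))).getD
    (n - sweepStart (blockW r) μ (sweepBlk (blockW r) μ n))
    (μ (sweepBlk (blockW r) μ n))

lemma sweepV_zero (r : α → α → Prop) (μ : ℕ → α) : sweepV r μ 0 = μ 0 := by
  have h0 : sweepBlk (blockW r) μ 0 = 0 := Nat.le_zero.mp (sweepBlk_le 0)
  simp [sweepV, h0, blockW, sweepStart]

lemma sweepV_edge {r : α → α → Prop} {μ : ℕ → α} (hμ : ∀ n, r (μ n) (μ (n + 1))) (n : ℕ) :
    r (sweepV r μ n) (sweepV r μ (n + 1)) := by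
  have hpos := blockW_pos r
  have h1 : sweepStart (blockW r) μ (sweepBlk (blockW r) μ n) ≤ n := sweepStart_blk_le n
  have h2 : n < sweepStart (blockW r) μ (sweepBlk (blockW r) μ n + 1) :=
    lt_sweepStart_blk_succ hpos n
  set m := sweepBlk (blockW r) μ n with hm
  have hlen : sweepStart (blockW r) μ (m + 1)
      = sweepStart (blockW r) μ m + (sweepWalk r (μ m)).length + 1 := by
    have : sweepStart (blockW r) μ (m + 1)
        = sweepStart (blockW r) μ m + (blockW r (μ m)).length := rfl
    simp only [this, blockW, List.length_cons]
    omega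
  rcases Nat.lt_or_ge (n + 1) (sweepStart (blockW r) μ (m + 1)) with hlt | hge
  · -- same block
    have hblk : sweepBlk (blockW r) μ (n + 1) = m := sweepBlk_eq hpos (by omega) hlt
    have hj : (n - sweepStart (blockW r) μ m) + 1 ≤ (sweepWalk r (μ m)).length := by omega
    have hedge := gwalk_getD_edge (μ m) (sweepWalk_walk r (μ m))
      (n - sweepStart (blockW r) μ m) hj
    have e2 : sweepV r μ (n + 1)
        = (blockW r (μ m)).getD (n + 1 - sweepStart (blockW r) μ m) (μ m) := by
      simp only [sweepV, hblk]
    have e1 : sweepV r μ n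
        = (blockW r (μ m)).getD (n - sweepStart (blockW r) μ m) (μ m) := rfl
    rw [e1, e2]
    have h3 : n + 1 - sweepStart (blockW r) μ m = (n - sweepStart (blockW r) μ m) + 1 := by
      omega
    rw [h3]
    exact hedge
  · -- next block
    have heq : n + 1 = sweepStart (blockW r) μ (m + 1) := by omega
    have hblk : sweepBlk (blockW r) μ (n + 1) = m + 1 := by
      apply sweepBlk_eq hpos (by omega)
      have := sweepStart_mono (μ := μ) hpos (show m + 1 < m + 1 + 1 by omega)
      omega
    have e2 : sweepV r μ (n + 1) = μ (m + 1) := by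
      simp only [sweepV, hblk]
      have h4 : n + 1 - sweepStart (blockW r) μ (m + 1) = 0 := by omega
      rw [h4]
      simp [blockW]
    have e1 : sweepV r μ n = μ m := by
      have hoff : n - sweepStart (blockW r) μ m = (sweepWalk r (μ m)).length := by omega
      have h5 : sweepV r μ n
          = (blockW r (μ m)).getD (n - sweepStart (blockW r) μ m) (μ m) := rfl
      rw [h5, hoff]
      exact gwalk_getD_last (μ m) (sweepWalk_walk r (μ m))
    rw [e1, e2]
    exact hμ m

lemma sweepV_mem {r : α → α → Prop} {μ : ℕ → α} {m : ℕ} {y : α}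
    (hy : y ∈ blockW r (μ m)) : ∃ p, m ≤ p ∧ sweepV r μ p = y := by
  have hpos := blockW_pos r
  obtain ⟨j, hj, hget⟩ := List.mem_iff_getElem.mp hy
  refine ⟨sweepStart (blockW r) μ m + j, ?_, ?_⟩
  · exact le_trans (le_sweepStart hpos m) (Nat.le_add_right _ _)
  · have hblk : sweepBlk (blockW r) μ (sweepStart (blockW r) μ m + j) = m := by
      apply sweepBlk_eq hpos (Nat.le_add_right _ _)
      have h6 : sweepStart (blockW r) μ (m + 1)
          = sweepStart (blockW r) μ m + (blockW r (μ m)).length := rfl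
      omega
    simp only [sweepV, hblk]
    have h7 : sweepStart (blockW r) μ m + j - sweepStart (blockW r) μ m = j := by omega
    rw [h7, List.getD_eq_getElem _ _ hj]
    exact hget

lemma sweepV_congr {r : α → α → Prop} {μ μ2 : ℕ → α} {n : ℕ}
    (h : ∀ k ≤ n, μ k = μ2 k) : sweepV r μ n = sweepV r μ2 n := by
  have hblk : sweepBlk (blockW r) μ n = sweepBlk (blockW r) μ2 n := by
    apply findGreatest_congr
    intro m hm
    rw [sweepStart_congr (bW := blockW r) (fun k hk => h k (by omega))]
  have hb2 : sweepBlk (blockW r) μ2 n ≤ n := sweepBlk_le n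
  have hμeq : μ (sweepBlk (blockW r) μ2 n) = μ2 (sweepBlk (blockW r) μ2 n) := h _ hb2
  have hst : sweepStart (blockW r) μ (sweepBlk (blockW r) μ2 n)
      = sweepStart (blockW r) μ2 (sweepBlk (blockW r) μ2 n) :=
    sweepStart_congr (fun k hk => h k (by omega))
  simp only [sweepV, hblk, hμeq, hst]

end GRKAux

section GRKPlay

/-- Along a play whose consecutive states are related by `E`, later states are reachable
from earlier ones. -/
lemma reach_play {V : Type*} {E : V → V → Prop} {π : ℕ → V}
    (h : ∀ n, E (π n) (π (n + 1))) {m n : ℕ} (hmn : m ≤ n) : Reach E (π m) (π n) := by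
  induction n, hmn using Nat.le_induction with
  | base => exact Relation.ReflTransGen.refl
  | succ n hmn ih => exact ih.tail (h n)

lemma sameSCC_fst {I O : Type*} {EI : I → I → Prop} {EO : O → O → Prop} {p q : I × O}
    (h : SameSCC (prodEdge EI EO) p q) : SameSCC EI p.1 q.1 :=
  ⟨Relation.ReflTransGen.lift (r := prodEdge EI EO) (p := EI) Prod.fst (fun _ _ e => e.1) _ _ h.1,
   Relation.ReflTransGen.lift (r := prodEdge EI EO) (p := EI) Prod.fst (fun _ _ e => e.1) _ _ h.2⟩

/-- In a finite type, from some point on every state of a sequence recurs infinitely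
often. -/
lemma eventually_recurrent {V : Type*} [Fintype V] (π : ℕ → V) :
    ∃ N, ∀ n, N ≤ n → ∀ M, ∃ m, M ≤ m ∧ π m = π n := by
  classical
  have hq : ∀ q : V, ∃ Nq : ℕ, (∀ M, ∃ m, M ≤ m ∧ π m = q) ∨ (∀ m, Nq ≤ m → π m ≠ q) := by
    intro q
    by_cases hrec : ∀ M, ∃ m, M ≤ m ∧ π m = q
    · exact ⟨0, Or.inl hrec⟩
    · push_neg at hrec
      obtain ⟨M, hM⟩ := hrec
      exact ⟨M, Or.inr hM⟩
  choose Nf hNf using hq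
  refine ⟨Finset.univ.sup Nf, fun n hn M => ?_⟩
  rcases hNf (π n) with hr | hnr
  · exact hr M
  · exact absurd rfl (hnr n (le_trans (Finset.le_sup (Finset.mem_univ _)) hn))

lemma hist_map_fst_getD {I O : Type*} (π : ℕ → I × O) (n k : ℕ) (hk : k ≤ n) (d : I) :
    ((hist π n).map Prod.fst).getD k d = (π k).1 := by
  have hlen : ((hist π n).map Prod.fst).length = n + 1 := by simp [hist]
  rw [List.getD_eq_getElem _ _ (by omega)]
  simp [hist]

lemma hist_map_snd_getD {I O : Type*} (π : ℕ → I × O) (n k : ℕ) (hk : k ≤ n) (d : O) :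
    ((hist π n).map Prod.snd).getD k d = (π k).2 := by
  have hlen : ((hist π n).map Prod.snd).length = n + 1 := by simp [hist]
  rw [List.getD_eq_getElem _ _ (by omega)]
  simp [hist]

/-- The simulating system strategy: it feeds `f` the virtual input sequence obtained
from the real inputs by inserting sweeps, and copies `f`'s outputs into the real play. -/
noncomputable def hatStrat {I O : Type*} (EI : I → I → Prop) (f : Strat I O)
    (s : I × O) : Strat I O :=
  fun hst i =>
    f ((List.range hst.length).map (fun k =>
        (sweepV EI (fun j => ((hst.map Prod.fst) ++ [i]).getD j i) k,
         (hst.map Prod.snd).getD k s.2)))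
      (sweepV EI (fun j => ((hst.map Prod.fst) ++ [i]).getD j i) hst.length)

lemma hatStrat_eval {I O : Type*} (EI : I → I → Prop) (f : Strat I O) (s : I × O)
    (π : ℕ → I × O) (n : ℕ) :
    hatStrat EI f s (hist π n) ((π (n + 1)).1)
      = f (hist (fun m => (sweepV EI (fun j => (π j).1) m, (π m).2)) n)
          (sweepV EI (fun j => (π j).1) (n + 1)) := by
  have hlen : (hist π n).length = n + 1 := by simp [hist]
  have hμ' : ∀ k ≤ n + 1,
      (((hist π n).map Prod.fst) ++ [(π (n + 1)).1]).getD k ((π (n + 1)).1) = (π k).1 := by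
    intro k hk
    rcases Nat.lt_or_ge k (n + 1) with hlt | hge
    · rw [List.getD_append _ _ _ _ (by simp [hist]; omega)]
      exact hist_map_fst_getD π n k (by omega) _
    · have hke : k = n + 1 := by omega
      subst hke
      rw [List.getD_append_right _ _ _ _ (by simp [hist])]
      simp [hist]
  unfold hatStrat
  congr 1
  · rw [hlen]
    show _ = (List.range (n + 1)).map _
    apply List.map_congr_left
    intro k hk
    have hkn : k ≤ n := by simpa [Nat.lt_succ_iff] using hk
    refine Prod.ext ?_ ?_
    · exact sweepV_congr (fun j hj => hμ' j (by omega))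
    · exact hist_map_snd_getD π n k hkn _
  · rw [hlen]
    exact sweepV_congr (fun j hj => hμ' j hj)

end GRKPlay

/-- Completeness for separated GR(k): if a state is not in the system's winning
region of the weak Büchi game GF(acc) (acc being the union of accepting SCCs
determined by the GR(k) formula), then the system has no winning strategy for the
separated GR(k) game from that state. -/
theorem grk_completeness {I O : Type*} [Fintype I] [Fintype O]
    {k : ℕ} {nl ml : Fin k → ℕ}
    (EI : I → I → Prop) (EO : O → O → Prop)
    (a : ∀ l : Fin k, Fin (nl l) → I → Prop)
    (g : ∀ l : Fin k, Fin (ml l) → O → Prop)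
    (s : I × O)
    (h : ¬ SysWins EI EO (AcceptingSt EI EO a g) s) :
    ¬ WinsGRk EI EO a g s := by
  intro hw
  obtain ⟨f, Hf⟩ := hw
  apply h
  classical
  refine ⟨hatStrat EI f s, ?_⟩
  intro π hcons henv
  set μ : ℕ → I := fun j => (π j).1 with hμdef
  set πv : ℕ → I × O := fun m => (sweepV EI μ m, (π m).2) with hπvdef
  -- the virtual play is consistent with f and environment-legal
  have hconsv : Consistent f s πv := by
    constructor
    · show (sweepV EI μ 0, (π 0).2) = s
      rw [sweepV_zero]
      show ((π 0).1, (π 0).2) = s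
      rw [Prod.mk.eta]
      exact hcons.1
    · intro n
      show (π (n + 1)).2 = f (hist πv n) (sweepV EI μ (n + 1))
      rw [hcons.2 n, hatStrat_eval]
  have henvv : EnvLegal EI πv := fun n => sweepV_edge (μ := μ) (fun m => henv m) n
  obtain ⟨hsysv, hsat⟩ := Hf πv hconsv henvv
  have hsys : SysLegal EO π := fun n => hsysv n
  refine ⟨hsys, ?_⟩
  -- limit analysis of the real play
  obtain ⟨N, hN⟩ := eventually_recurrent π
  have hqrec : ∀ M, ∃ m, M ≤ m ∧ π m = π N := hN N le_rfl
  have hEsteps : ∀ n, prodEdge EI EO (π n) (π (n + 1)) := fun n => ⟨henv n, hsys n⟩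
  set q := π N with hqdef
  have hAcc : AcceptingSt EI EO a g q := by
    by_contra hneg
    simp only [AcceptingSt, not_forall, not_or] at hneg
    obtain ⟨l, hng, hna⟩ := hneg
    push_neg at hng hna
    obtain ⟨jj, hjj⟩ := hng
    -- a sweep of the component of q.1 exists
    have hcyc : ∃ w, SweepSpec EI q.1 w := by
      obtain ⟨n1, hn1, hπn1⟩ := hqrec (N + 1)
      have hreach : Reach EI (μ (N + 1)) (μ n1) := reach_play (fun m => henv m) hn1
      have hend : μ n1 = q.1 := congrArg Prod.fst hπn1
      exact sweepSpec_exists (henv N) (by rw [hend] at hreach; exact hreach)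
    -- all assumptions of conjunct l hold infinitely often along the virtual play
    have hassio : ∀ ii, InfOften (fun p : I × O => a l ii p.1) πv := by
      intro ii
      obtain ⟨i', hi'mem, hai⟩ := hna ii
      obtain ⟨o', hscc⟩ := hi'mem
      have hIscc : SameSCC EI q.1 i' := sameSCC_fst hscc
      intro M
      obtain ⟨m, hmM, hπm⟩ := hqrec M
      have hmem : i' ∈ blockW EI (μ m) := by
        have hμm : μ m = q.1 := congrArg Prod.fst hπm
        rw [show blockW EI (μ m) = q.1 :: sweepWalk EI q.1 by rw [hμm]; rfl]
        exact sweepWalk_covers hcyc i' hIscc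
      obtain ⟨p, hpm, hpv⟩ := sweepV_mem hmem
      refine ⟨p, le_trans hmM hpm, ?_⟩
      show a l ii (sweepV EI μ p)
      rw [hpv]
      exact hai
    -- hence all guarantees of l hold infinitely often along the virtual play
    obtain ⟨n, hnN, hgn⟩ := hsat l hassio jj N
    -- but the output at time n lies in the output projection of the SCC of q
    have hreach1 : Reach (prodEdge EI EO) q (π n) := reach_play hEsteps hnN
    obtain ⟨m2, hm2, hπm2⟩ := hqrec n
    have hreach2 : Reach (prodEdge EI EO) (π n) q := by
      have := reach_play hEsteps hm2
      rw [hπm2] at this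
      exact this
    exact hjj (π n).2 ⟨(π n).1, by rw [Prod.mk.eta]; exact ⟨hreach1, hreach2⟩⟩ hgn
  intro M
  obtain ⟨m, hmM, hπm⟩ := hqrec M
  exact ⟨m, hmM, by rw [hπm]; exact hAcc⟩
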